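/- Let n ≥ 1 and let T ∈ ℝ^{n×n} be the matrix with entries T_{i,i+1} = −1 and T_{i+1,i} = 1 for 1 ≤ i ≤ n−1, T_{n,n} = 1, and all other entries 0. If λ ∈ ℂ and x ∈ ℂ^n, x ≠ 0, satisfy T x = λ x, then the last coordinate x_n is nonzero and Re(λ) = |x_n|²/‖x‖². In particular every eigenvalue of T has strictly positive real part. -/

import Mathlib

open Matrix

lemma stmt6_rowf (n : ℕ) (T : Matrix (Fin n) (Fin n) ℂ)
    (hT : ∀ i j : Fin n, T i j =
      if (i : ℕ) + 1 = (j : ℕ) then -1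
      else if (j : ℕ) + 1 = (i : ℕ) then 1
      else if (i : ℕ) = n - 1 ∧ (j : ℕ) = n - 1 then 1
      else 0)
    (x : Fin n → ℂ) (i : Fin n) :
    T.mulVec x i =
      (if h : (i : ℕ) + 1 < n then -x ⟨(i : ℕ) + 1, h⟩ else 0)
      + (if _h : 0 < (i : ℕ) then x ⟨(i : ℕ) - 1, lt_of_le_of_lt (Nat.sub_le _ _) i.isLt⟩ else 0)
      + (if (i : ℕ) = n - 1 then x i else 0) := by
  have key : ∀ j : Fin n, T i j * x j =
      (if (i : ℕ) + 1 = (j : ℕ) then -x j else 0)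
      + (if (j : ℕ) + 1 = (i : ℕ) then x j else 0)
      + (if (i : ℕ) = n - 1 ∧ (j : ℕ) = n - 1 then x j else 0) := by
    intro j
    have hi := i.isLt
    have hj := j.isLt
    rw [hT]
    split_ifs <;> first | omega | ring
  show ∑ j, T i j * x j = _
  rw [Finset.sum_congr rfl (fun j _ => key j), Finset.sum_add_distrib, Finset.sum_add_distrib]
  congr 1
  · congr 1
    · by_cases h : (i : ℕ) + 1 < n
      · rw [dif_pos h, Fintype.sum_eq_single (⟨(i : ℕ) + 1, h⟩ : Fin n)
          (fun j hj => if_neg (fun hc => hj (Fin.ext hc.symm))), if_pos rfl]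
      · rw [dif_neg h]
        exact Finset.sum_eq_zero fun j _ => if_neg (fun hc => h (by have := j.isLt; omega))
    · by_cases h : 0 < (i : ℕ)
      · rw [dif_pos h, Fintype.sum_eq_single
            (⟨(i : ℕ) - 1, lt_of_le_of_lt (Nat.sub_le _ _) i.isLt⟩ : Fin n)
          (fun j hj => if_neg (fun hc => hj (Fin.ext (show (j : ℕ) = (i : ℕ) - 1 by omega)))),
          if_pos (show (i : ℕ) - 1 + 1 = (i : ℕ) by omega)]
      · rw [dif_neg h]
        exact Finset.sum_eq_zero fun j _ => if_neg (by omega)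
  · by_cases h : (i : ℕ) = n - 1
    · rw [if_pos h, Fintype.sum_eq_single i
        (fun j hj => if_neg (fun hc => hj (Fin.ext (show (j : ℕ) = (i : ℕ) by omega)))),
        if_pos ⟨h, h⟩]
    · rw [if_neg h]
      exact Finset.sum_eq_zero fun j _ => if_neg (fun hc => h hc.1)

set_option maxHeartbeats 1600000 in
theorem stmt6 (n : ℕ) (hn : 1 ≤ n)
    (T : Matrix (Fin n) (Fin n) ℂ)
    (hT : ∀ i j : Fin n, T i j =
      if (i : ℕ) + 1 = (j : ℕ) then -1
      else if (j : ℕ) + 1 = (i : ℕ) then 1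
      else if (i : ℕ) = n - 1 ∧ (j : ℕ) = n - 1 then 1
      else 0)
    (lam : ℂ) (x : Fin n → ℂ) (hx : x ≠ 0)
    (heig : T.mulVec x = lam • x) :
    x ⟨n - 1, by omega⟩ ≠ 0 ∧
    lam.re = ‖x ⟨n - 1, by omega⟩‖ ^ 2 / ∑ i, ‖x i‖ ^ 2 ∧
    0 < lam.re := by
  set m : Fin n := ⟨n - 1, by omega⟩ with hm_def
  have hxeq : ∀ (a b : ℕ) (ha : a < n) (hb : b < n), a = b → x ⟨a, ha⟩ = x ⟨b, hb⟩ := by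
    intro a b ha hb h; subst h; rfl
  have hrow : ∀ i : Fin n, lam * x i =
      (if h : (i : ℕ) + 1 < n then -x ⟨(i : ℕ) + 1, h⟩ else 0)
      + (if _h : 0 < (i : ℕ) then x ⟨(i : ℕ) - 1, lt_of_le_of_lt (Nat.sub_le _ _) i.isLt⟩ else 0)
      + (if (i : ℕ) = n - 1 then x i else 0) := by
    intro i
    rw [← stmt6_rowf n T hT x i, heig]
    simp
  -- Part A: x m ≠ 0
  have hxm : x m ≠ 0 := by
    intro hm
    apply hx
    have claim : ∀ j : ℕ, ∀ hj : j < n, x ⟨n - 1 - j, by omega⟩ = 0 := by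
      intro j
      induction j using Nat.strong_induction_on with
      | _ j IH =>
        intro hj
        match j, hj with
        | 0, hj => exact hm
        | 1, hj =>
          -- n ≥ 2; use row m
          have h := hrow m
          rw [hm, mul_zero] at h
          rw [dif_neg (by simp [hm_def]; omega), dif_pos (by simp [hm_def]; omega),
            if_pos (by simp [hm_def])] at h
          have hlast : x ⟨(m : ℕ) - 1, lt_of_le_of_lt (Nat.sub_le _ _) m.isLt⟩ = 0 := by
            linear_combination -h
          exact (hxeq _ _ _ (lt_of_le_of_lt (Nat.sub_le _ _) m.isLt) rfl).trans hlast
        | (j + 2), hj =>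
          -- use row i = ⟨n - 1 - (j+1)⟩ = ⟨n - j - 2⟩
          have hjn : j + 2 < n := hj
          set i : Fin n := ⟨n - 1 - (j + 1), by omega⟩ with hi_def
          have h := hrow i
          have hiv : (i : ℕ) = n - 1 - (j + 1) := rfl
          have hx1 : x i = 0 := IH (j + 1) (by omega) (by omega)
          have hlt : (i : ℕ) + 1 < n := by omega
          rw [dif_pos hlt, dif_pos (by omega), if_neg (by omega), add_zero, hx1, mul_zero] at h
          have hx2 : x ⟨(i : ℕ) + 1, hlt⟩ = 0 :=
            (hxeq _ (n - 1 - j) hlt (by omega) (by omega)).trans (IH j (by omega) (by omega))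
          rw [hx2] at h
          have hlast : x ⟨(i : ℕ) - 1, lt_of_le_of_lt (Nat.sub_le _ _) i.isLt⟩ = 0 := by
            linear_combination -h
          exact (hxeq _ _ _ (lt_of_le_of_lt (Nat.sub_le _ _) i.isLt) (by omega)).trans hlast
    funext i
    have hi := i.isLt
    have hcl := claim (n - 1 - (i : ℕ)) (by omega)
    show x i = (0 : Fin n → ℂ) i
    rw [Pi.zero_apply]
    exact (hxeq (i : ℕ) (n - 1 - (n - 1 - (i : ℕ))) i.isLt (by omega) (by omega)).trans hcl
  -- Part B: the real-part formula
  set S := ∑ i, (starRingEnd ℂ) (x i) * T.mulVec x i with hS_def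
  set N := ∑ i, ‖x i‖ ^ 2 with hN_def
  have habs : ∀ z : ℂ, (starRingEnd ℂ) z * z = (‖z‖ ^ 2 : ℝ) := by
    intro z
    rw [Complex.conj_mul']; norm_cast
  have hS1 : S = lam * (N : ℂ) := by
    rw [hS_def, heig, hN_def]
    have hcast : ((∑ i, ‖x i‖ ^ 2 : ℝ) : ℂ)
        = ∑ i, ((‖x i‖ ^ 2 : ℝ) : ℂ) := by push_cast; rfl
    rw [hcast, Finset.mul_sum]
    refine Finset.sum_congr rfl fun i _ => ?_
    rw [Pi.smul_apply, smul_eq_mul, ← habs]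
    ring
  have hS2 : S + star S = 2 * ((‖x m‖ ^ 2 : ℝ) : ℂ) := by
    have expand : S = ∑ i, ∑ j, (starRingEnd ℂ) (x i) * (T i j * x j) := by
      simp [hS_def, Matrix.mulVec, dotProduct, Finset.mul_sum]
    have hstar : star S = ∑ i : Fin n, ∑ j : Fin n, x j * (star (T j i) * (starRingEnd ℂ) (x i)) := by
      rw [expand, ← Finset.sum_comm]
      simp [star_sum, star_mul']
    have key : ∀ i j : Fin n, (starRingEnd ℂ) (x i) * (T i j * x j)
        + x j * (star (T j i) * (starRingEnd ℂ) (x i)) =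
        if i = m ∧ j = m then 2 * ((starRingEnd ℂ) (x i) * x j) else 0 := by
      intro i j
      have hi := i.isLt
      have hj := j.isLt
      rw [hT i j, hT j i]
      simp only [Fin.ext_iff, hm_def]
      split_ifs <;> first | omega | (simp only [star_neg, star_one, star_zero]; ring)
    calc S + star S = ∑ i : Fin n, ∑ j : Fin n, ((starRingEnd ℂ) (x i) * (T i j * x j)
          + x j * (star (T j i) * (starRingEnd ℂ) (x i))) := by
          rw [hstar, expand, ← Finset.sum_add_distrib]
          exact Finset.sum_congr rfl fun i _ => (Finset.sum_add_distrib).symm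
      _ = ∑ i : Fin n, ∑ j : Fin n,
            (if i = m ∧ j = m then 2 * ((starRingEnd ℂ) (x i) * x j) else 0) :=
          Finset.sum_congr rfl fun i _ => Finset.sum_congr rfl fun j _ => key i j
      _ = 2 * ((starRingEnd ℂ) (x m) * x m) := by
          simp [ite_and, Finset.sum_ite_eq']
      _ = 2 * ((‖x m‖ ^ 2 : ℝ) : ℂ) := by rw [habs]
  have hN_pos : 0 < N := by
    obtain ⟨i0, hi0⟩ := Function.ne_iff.mp hx
    refine Finset.sum_pos' (fun i _ => by positivity) ⟨i0, Finset.mem_univ _, ?_⟩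
    have : ‖x i0‖ > 0 := norm_pos_iff.mpr hi0
    positivity
  have hre : lam.re * N = ‖x m‖ ^ 2 := by
    have h2 : (S + star S).re = 2 * (‖x m‖ ^ 2) := by
      rw [hS2, show (2 : ℂ) * ((‖x m‖ ^ 2 : ℝ) : ℂ)
        = ((2 * ‖x m‖ ^ 2 : ℝ) : ℂ) by push_cast; ring, Complex.ofReal_re]
    rw [Complex.add_re, (by rfl : star S = (starRingEnd ℂ) S), Complex.conj_re] at h2
    have hSre : S.re = lam.re * N := by
      rw [hS1]; simp [Complex.mul_re]
    rw [hSre] at h2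
    linarith
  have hre' : lam.re = ‖x m‖ ^ 2 / N := by
    rw [eq_div_iff (ne_of_gt hN_pos)]
    linarith [hre]
  exact ⟨hxm, hre', hre' ▸ div_pos (pow_pos (norm_pos_iff.mpr hxm) 2) hN_pos⟩
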